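/- Every complex root of the characteristic polynomial of the real matrix M := (B + γC)⁻¹ C is real (has zero imaginary part). -/

import Mathlib

open Matrix Polynomial ComplexOrder

/-- Let `n > 0`, let `B` and `C` be real symmetric `n×n` matrices with `C` positive
semidefinite, and let `γ : ℝ` be such that `B + γ • C` is invertible; set
`M := (B + γ • C)⁻¹ * C`.  Then every complex root of the characteristic polynomial
of `M` is real (has zero imaginary part). -/
theorem stmt_1 (n : ℕ) (hn : 0 < n) (B C : Matrix (Fin n) (Fin n) ℝ)
    (hB : B.IsSymm) (hC : C.PosSemidef) (γ : ℝ)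
    (hinv : IsUnit (B + γ • C)) :
    ∀ z : ℂ, (((((B + γ • C)⁻¹ * C)).charpoly.map (algebraMap ℝ ℂ)).IsRoot z) → z.im = 0 := by
  intro z hz
  set f : ℝ →+* ℂ := algebraMap ℝ ℂ with hf
  set A : Matrix (Fin n) (Fin n) ℝ := B + γ • C with hAdef
  have hfstar : Function.Semiconj ⇑f star star := fun x => by
    simp [hf, Complex.conj_ofReal]
  -- symmetry of C and A
  have hCs : C.IsSymm := Matrix.IsSymm.ext fun i j => by
    simpa using hC.1.apply i j
  have hAs : A.IsSymm := hB.add (hCs.smul γ)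
  -- Hermitian complexifications
  have hAH : (A.map ⇑f).IsHermitian := by
    have : A.IsHermitian := by
      rwa [IsHermitian, conjTranspose_eq_transpose_of_trivial]
    exact this.map _ hfstar
  -- PosSemidef of complexified C
  have hC' : (C.map ⇑f).PosSemidef := by
    obtain ⟨D, hD⟩ : ∃ D : Matrix (Fin n) (Fin n) ℝ, C = Dᴴ * D := by
      open scoped MatrixOrder in
      exact CStarAlgebra.nonneg_iff_eq_star_mul_self.mp hC.nonneg
    have : C.map ⇑f = (D.map ⇑f)ᴴ * (D.map ⇑f) := by
      rw [hD, Matrix.map_mul, conjTranspose_map _ hfstar]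
    rw [this]
    exact posSemidef_conjTranspose_mul_self _
  -- root gives det (z•1 - M') = 0
  have hdet : (z • (1 : Matrix (Fin n) (Fin n) ℂ) - (A⁻¹ * C).map ⇑f).det = 0 := by
    have h1 : ((A⁻¹ * C).map ⇑f).charpoly.IsRoot z := by
      rwa [Matrix.charpoly_map]
    have h2 : (charmatrix ((A⁻¹ * C).map ⇑f)).map (Polynomial.eval z)
        = z • (1 : Matrix (Fin n) (Fin n) ℂ) - (A⁻¹ * C).map ⇑f := by
      ext i j
      by_cases h : i = j <;>
        simp [charmatrix_apply, h, Matrix.one_apply, diagonal_apply]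
    have h3 := h1
    rw [Polynomial.IsRoot, Matrix.charpoly, ← Polynomial.coe_evalRingHom,
      RingHom.map_det (Polynomial.evalRingHom z),
      RingHom.mapMatrix_apply, Polynomial.coe_evalRingHom] at h3
    rwa [← h2]
  -- eigenvector
  obtain ⟨v, hv0, hv⟩ := Matrix.exists_mulVec_eq_zero_iff.mpr hdet
  have heig : ((A⁻¹ * C).map ⇑f) *ᵥ v = z • v := by
    have := hv
    rw [sub_mulVec, smul_mulVec, one_mulVec, sub_eq_zero] at this
    exact this.symm
  -- multiply by A'
  have hdetA : IsUnit A.det := (Matrix.isUnit_iff_isUnit_det A).mp hinv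
  have hAA : A * (A⁻¹ * C) = C := by
    rw [← mul_assoc, Matrix.mul_nonsing_inv _ hdetA, one_mul]
  have hkey : (C.map ⇑f) *ᵥ v = z • ((A.map ⇑f) *ᵥ v) := by
    have h4 : (A.map ⇑f) *ᵥ (((A⁻¹ * C).map ⇑f) *ᵥ v) = (C.map ⇑f) *ᵥ v := by
      rw [mulVec_mulVec, ← Matrix.map_mul, hAA]
    rw [← h4, heig, mulVec_smul]
  -- dot products
  set a : ℂ := star v ⬝ᵥ ((C.map ⇑f) *ᵥ v) with ha
  set d : ℂ := star v ⬝ᵥ ((A.map ⇑f) *ᵥ v) with hd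
  have heq : a = z * d := by
    rw [ha, hkey, dotProduct_smul, hd, smul_eq_mul]
  have haim : a.im = 0 := by
    have := hC'.dotProduct_mulVec_nonneg v
    rw [← ha] at this
    exact (Complex.le_def.mp this).2.symm
  have hdim : d.im = 0 := by
    have hstar : star d = d := by
      rw [hd]
      calc star (star v ⬝ᵥ (A.map ⇑f) *ᵥ v)
          = star ((A.map ⇑f) *ᵥ v) ⬝ᵥ star (star v) := (star_dotProduct_star _ _).symm
        _ = (star v ᵥ* (A.map ⇑f)ᴴ) ⬝ᵥ v := by rw [star_mulVec, star_star]
        _ = star v ⬝ᵥ ((A.map ⇑f)ᴴ *ᵥ v) := by rw [dotProduct_mulVec]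
        _ = star v ⬝ᵥ ((A.map ⇑f) *ᵥ v) := by rw [hAH.eq]
    exact Complex.conj_eq_iff_im.mp hstar
  by_cases hdz : d = 0
  · -- then a = 0, so C' v = 0, so z • (A' v) = 0 with A' v ≠ 0
    have ha0 : a = 0 := by rw [heq, hdz, mul_zero]
    have hCv : (C.map ⇑f) *ᵥ v = 0 := (hC'.dotProduct_mulVec_zero_iff v).mp (by rw [← ha, ha0])
    have hAv : (A.map ⇑f) *ᵥ v ≠ 0 := by
      intro hAv
      have : (A.map ⇑f).det = 0 := Matrix.exists_mulVec_eq_zero_iff.mp ⟨v, hv0, hAv⟩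
      rw [← RingHom.mapMatrix_apply, ← RingHom.map_det] at this
      exact hdetA.ne_zero (by simpa [hf, Complex.ofReal_eq_zero] using this)
    have : z • ((A.map ⇑f) *ᵥ v) = 0 := by rw [← hkey, hCv]
    rcases smul_eq_zero.mp this with h | h
    · rw [h]; rfl
    · exact absurd h hAv
  · -- z = a / d is real
    have hz' : z = a / d := by
      rw [heq, mul_div_assoc, div_self hdz, mul_one]
    rw [hz', Complex.div_im, haim, hdim]
    simp
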